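/- Subexponential tail characterization: assume w is exponentially bounded and let mu in D_mu. Let nu^{1,(1)}_mu(k) = sum over j in N of nu^1_mu(k,j) be the marginal of nu^1_mu with respect to the first species. Then liminf as k -> infinity of -(1/k) * log nu^{1,(1)}_mu(k) equals 0 if and only if z(mu + epsilon*e_1) = infinity for every epsilon > 0, where e_1 = (1,0). The analogous statement holds for the second species with e_2 = (0,1). -/

import Mathlib

open Real Set Filter Topology

noncomputable section

/-- Euclidean norm `|k|` of a pair of naturals. -/
def knorm (k : ℕ × ℕ) : ℝ := Real.sqrt ((k.1 : ℝ) ^ 2 + (k.2 : ℝ) ^ 2)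

/-- Dot product `μ·k` of a chemical potential with an occupation vector. -/
def dotNat (μ : ℝ × ℝ) (k : ℕ × ℕ) : ℝ := μ.1 * k.1 + μ.2 * k.2

/-- Summand `w(k) exp(μ·k)` of the grand-canonical partition function. -/
def zsummand (w : ℕ × ℕ → ℝ) (μ : ℝ × ℝ) (k : ℕ × ℕ) : ℝ := w k * Real.exp (dotNat μ k)

/-- `dom z`: the set of `μ` where `z(μ) = ∑_k w(k) exp(μ·k)` is finite. -/
def domz (w : ℕ × ℕ → ℝ) : Set (ℝ × ℝ) := {μ | Summable (zsummand w μ)}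

/-- `D_μ`: the set of `μ` where `∑_k k_i w(k) exp(μ·k)` is finite for `i = 1,2`. -/
def Dmu (w : ℕ × ℕ → ℝ) : Set (ℝ × ℝ) :=
  {μ | Summable (fun k : ℕ × ℕ => (k.1 : ℝ) * zsummand w μ k) ∧
       Summable (fun k : ℕ × ℕ => (k.2 : ℝ) * zsummand w μ k)}

/-- `w` is exponentially bounded: `w(k) ≤ ξ^|k|` for some `ξ > 0`. -/
def ExpBounded (w : ℕ × ℕ → ℝ) : Prop := ∃ ξ : ℝ, 0 < ξ ∧ ∀ k : ℕ × ℕ, w k ≤ ξ ^ knorm k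

/-- The grand-canonical partition function `z(μ)`. -/
def zfun (w : ℕ × ℕ → ℝ) (μ : ℝ × ℝ) : ℝ := ∑' k : ℕ × ℕ, zsummand w μ k

/-- The pressure `p(μ) = log z(μ)`. -/
def press (w : ℕ × ℕ → ℝ) (μ : ℝ × ℝ) : ℝ := Real.log (zfun w μ)

/-- The single-site grand-canonical mass function `ν¹_μ(k) = w(k) exp(μ·k)/z(μ)`. -/
def nu1 (w : ℕ × ℕ → ℝ) (μ : ℝ × ℝ) (k : ℕ × ℕ) : ℝ := zsummand w μ k / zfun w μ

/-- Density of the first species `R₁(μ)`. -/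
def R1 (w : ℕ × ℕ → ℝ) (μ : ℝ × ℝ) : ℝ := ∑' k : ℕ × ℕ, (k.1 : ℝ) * nu1 w μ k

/-- Density of the second species `R₂(μ)`. -/
def R2 (w : ℕ × ℕ → ℝ) (μ : ℝ × ℝ) : ℝ := ∑' k : ℕ × ℕ, (k.2 : ℝ) * nu1 w μ k

/-- The density map `R(μ) = (R₁(μ), R₂(μ))`. -/
def Rmap (w : ℕ × ℕ → ℝ) (μ : ℝ × ℝ) : ℝ × ℝ := (R1 w μ, R2 w μ)

/-- Dot product of two real vectors. -/
def dotR (a b : ℝ × ℝ) : ℝ := a.1 * b.1 + a.2 * b.2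

/-- Marginal of `ν¹_μ` with respect to the first species. -/
def marg1 (w : ℕ × ℕ → ℝ) (μ : ℝ × ℝ) (k : ℕ) : ℝ := ∑' j : ℕ, nu1 w μ (k, j)

/-- Marginal of `ν¹_μ` with respect to the second species. -/
def marg2 (w : ℕ × ℕ → ℝ) (μ : ℝ × ℝ) (k : ℕ) : ℝ := ∑' j : ℕ, nu1 w μ (j, k)

lemma zsummand_pos (w : ℕ × ℕ → ℝ) (hw : ∀ k, 0 < w k) (μ : ℝ × ℝ) (k : ℕ × ℕ) :
    0 < zsummand w μ k := mul_pos (hw k) (Real.exp_pos _)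

lemma summable_z (w : ℕ × ℕ → ℝ) (hw : ∀ k, 0 < w k) (μ : ℝ × ℝ) (hμ : μ ∈ Dmu w) :
    Summable (zsummand w μ) := by
  have h12 : Summable (fun k : ℕ × ℕ => ((k.1 : ℝ) + (k.2 : ℝ)) * zsummand w μ k) := by
    simpa [add_mul] using hμ.1.add hμ.2
  have hfin : Summable (fun k : ℕ × ℕ =>
      if k = ((0, 0) : ℕ × ℕ) then zsummand w μ (0, 0) else 0) := by
    apply summable_of_ne_finset_zero (s := {((0, 0) : ℕ × ℕ)})
    intro k hk
    simp only [Finset.mem_singleton] at hk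
    simp only [if_neg hk]
  refine Summable.of_nonneg_of_le (fun k => (zsummand_pos w hw μ k).le) ?_ (h12.add hfin)
  intro k
  by_cases hk : k = ((0, 0) : ℕ × ℕ)
  · subst hk; simp
  · have h1 : (1 : ℝ) ≤ (k.1 : ℝ) + (k.2 : ℝ) := by
      have : 1 ≤ k.1 + k.2 := by
        rcases Nat.eq_zero_or_pos (k.1 + k.2) with h | h
        · exfalso; apply hk
          have := Nat.add_eq_zero.mp h
          exact Prod.ext this.1 this.2
        · exact h
      exact_mod_cast this
    have := le_mul_of_one_le_left (zsummand_pos w hw μ k).le h1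
    simp only [hk, if_false]
    linarith

lemma fiber_tsum_le {f : ℕ × ℕ → ℝ} (hf : Summable f) (h0 : ∀ p, 0 ≤ f p) (k : ℕ) :
    (∑' j : ℕ, f (k, j)) ≤ ∑' p : ℕ × ℕ, f p := by
  refine Summable.tsum_le_tsum_of_inj (fun j => ((k, j) : ℕ × ℕ)) ?_ (fun c _ => h0 c)
    (fun j => le_rfl) (hf.prod_factor k) hf
  intro a b hab
  exact congrArg Prod.snd hab

lemma key (w : ℕ × ℕ → ℝ) (hw : ∀ k, 0 < w k) (μ : ℝ × ℝ) (hμ : μ ∈ Dmu w) :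
    (Filter.liminf
        (fun k : ℕ => ((-(1 / (k : ℝ)) * Real.log (marg1 w μ k) : ℝ) : EReal)) atTop
        = (0 : EReal)) ↔
      (∀ ε : ℝ, 0 < ε → ¬ Summable (zsummand w (μ.1 + ε, μ.2))) := by
  set u : ℕ → EReal :=
    fun k : ℕ => ((-(1 / (k : ℝ)) * Real.log (marg1 w μ k) : ℝ) : EReal) with hu
  have hz : Summable (zsummand w μ) := summable_z w hw μ hμ
  have hz0 : ∀ p, 0 ≤ zsummand w μ p := fun p => (zsummand_pos w hw μ p).le
  have hzpos : 0 < zfun w μ := Summable.tsum_pos hz hz0 (0, 0) (zsummand_pos w hw μ (0, 0))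
  -- the un-normalized marginal
  set a : ℕ → ℝ := fun k => ∑' j : ℕ, zsummand w μ (k, j) with ha
  have hasum : ∀ k, Summable (fun j : ℕ => zsummand w μ (k, j)) := fun k => hz.prod_factor k
  have hapos : ∀ k, 0 < a k :=
    fun k => Summable.tsum_pos (hasum k) (fun j => hz0 (k, j)) 0 (zsummand_pos w hw μ (k, 0))
  have hale : ∀ k, a k ≤ zfun w μ := fun k => fiber_tsum_le hz hz0 k
  have hmarg : ∀ k, marg1 w μ k = a k / zfun w μ := by
    intro k
    simp only [marg1, nu1, ha]
    exact tsum_div_const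
  have hmpos : ∀ k, 0 < marg1 w μ k := by
    intro k; rw [hmarg k]; exact div_pos (hapos k) hzpos
  have hmle : ∀ k, marg1 w μ k ≤ 1 := by
    intro k; rw [hmarg k]
    exact div_le_one_of_le₀ (hale k) hzpos.le
  -- liminf is always ≥ 0
  have hev0 : ∀ᶠ k : ℕ in atTop, (0 : EReal) ≤ u k := by
    filter_upwards [eventually_ge_atTop 1] with k hk
    have hkpos : (0 : ℝ) < (k : ℝ) := by exact_mod_cast hk
    have hlog : Real.log (marg1 w μ k) ≤ 0 := Real.log_nonpos (hmpos k).le (hmle k)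
    have : (0 : ℝ) ≤ -(1 / (k : ℝ)) * Real.log (marg1 w μ k) := by
      have h1 : (0 : ℝ) ≤ 1 / (k : ℝ) := by positivity
      nlinarith
    simp only [hu]
    exact_mod_cast this
  have h0le : (0 : EReal) ≤ liminf u atTop := le_liminf_of_le (by isBoundedDefault) hev0
  constructor
  · -- forward direction: liminf = 0 → non-summability
    intro hlim ε hε hsum
    set Zε : ℝ := ∑' p : ℕ × ℕ, zsummand w (μ.1 + ε, μ.2) p with hZε
    have hz0' : ∀ p, 0 ≤ zsummand w (μ.1 + ε, μ.2) p :=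
      fun p => (zsummand_pos w hw _ p).le
    have hZεpos : 0 < Zε :=
      Summable.tsum_pos hsum hz0' (0, 0) (zsummand_pos w hw _ (0, 0))
    have hrel : ∀ p : ℕ × ℕ,
        zsummand w μ p = Real.exp (-(ε * p.1)) * zsummand w (μ.1 + ε, μ.2) p := by
      intro p
      simp only [zsummand, dotNat]
      rw [mul_comm (Real.exp _), mul_assoc, ← Real.exp_add]
      congr 1
      ring
    have hak : ∀ k, a k ≤ Real.exp (-(ε * k)) * Zε := by
      intro k
      have : a k = Real.exp (-(ε * k)) * ∑' j : ℕ, zsummand w (μ.1 + ε, μ.2) (k, j) := by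
        simp only [ha]
        rw [← tsum_mul_left]
        exact tsum_congr fun j => hrel (k, j)
      rw [this]
      exact mul_le_mul_of_nonneg_left (fiber_tsum_le hsum hz0' k) (Real.exp_nonneg _)
    set c : ℝ := Real.log (Zε / zfun w μ) with hc
    have hlogm : ∀ k : ℕ, Real.log (marg1 w μ k) ≤ c - ε * k := by
      intro k
      have h1 : marg1 w μ k ≤ Real.exp (-(ε * k)) * Zε / zfun w μ := by
        rw [hmarg k]
        exact div_le_div_of_nonneg_right (hak k) hzpos.le
      calc Real.log (marg1 w μ k) ≤ Real.log (Real.exp (-(ε * k)) * Zε / zfun w μ) :=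
            Real.log_le_log (hmpos k) h1
        _ = c - ε * k := by
            rw [mul_div_assoc, Real.log_mul (Real.exp_ne_zero _)
              (by positivity), Real.log_exp]
            ring
    -- eventually u k ≥ ε/2
    have htend : Tendsto (fun k : ℕ => ε - c / k) atTop (𝓝 ε) := by
      have := (tendsto_const_nhds (x := ε) (f := atTop (α := ℕ))).sub
        (tendsto_const_div_atTop_nhds_zero_nat c)
      simpa using this
    have hev2 : ∀ᶠ k : ℕ in atTop, ε / 2 < ε - c / k :=
      htend.eventually (eventually_gt_nhds (by linarith))
    have hev : ∀ᶠ k : ℕ in atTop, ((ε / 2 : ℝ) : EReal) ≤ u k := by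
      filter_upwards [hev2, eventually_ge_atTop 1] with k hk2 hk1
      have hkpos : (0 : ℝ) < (k : ℝ) := by exact_mod_cast hk1
      have h2 : -(1 / (k : ℝ)) * Real.log (marg1 w μ k) ≥ ε - c / k := by
        have h3 : -(1 / (k : ℝ)) * Real.log (marg1 w μ k)
            ≥ -(1 / (k : ℝ)) * (c - ε * k) := by
          have := hlogm k
          have h1 : (0 : ℝ) ≤ 1 / (k : ℝ) := by positivity
          nlinarith
        have h4 : -(1 / (k : ℝ)) * (c - ε * k) = ε - c / k := by
          field_simp
          ring
        linarith [h4 ▸ h3]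
      have : (ε / 2 : ℝ) ≤ -(1 / (k : ℝ)) * Real.log (marg1 w μ k) := by linarith
      simp only [hu]
      exact_mod_cast this
    have : ((ε / 2 : ℝ) : EReal) ≤ liminf u atTop :=
      le_liminf_of_le (by isBoundedDefault) hev
    rw [hlim] at this
    have : (ε / 2 : ℝ) ≤ 0 := by exact_mod_cast this
    linarith
  · -- reverse direction
    intro hall
    refine le_antisymm ?_ h0le
    by_contra hlt
    push_neg at hlt
    obtain ⟨ε, hε0, hεlim⟩ := EReal.exists_between_coe_real hlt
    have hεpos : (0 : ℝ) < ε := by exact_mod_cast hε0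
    have hev : ∀ᶠ k : ℕ in atTop, ((ε : ℝ) : EReal) < u k :=
      eventually_lt_of_lt_liminf hεlim
    -- so eventually a k < zfun * exp(-ε k)
    have hdecay : ∀ᶠ k : ℕ in atTop, a k ≤ zfun w μ * Real.exp (-(ε * k)) := by
      filter_upwards [hev, eventually_ge_atTop 1] with k hk hk1
      have hkpos : (0 : ℝ) < (k : ℝ) := by exact_mod_cast hk1
      simp only [hu] at hk
      have hk' : ε < -(1 / (k : ℝ)) * Real.log (marg1 w μ k) := by exact_mod_cast hk
      have hlog : Real.log (marg1 w μ k) < -(ε * k) := by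
        have h5 := mul_lt_mul_of_pos_right hk' hkpos
        have h6 : -(1 / (k : ℝ)) * Real.log (marg1 w μ k) * k
            = -Real.log (marg1 w μ k) := by field_simp
        rw [h6] at h5
        linarith
      have hm : marg1 w μ k ≤ Real.exp (-(ε * k)) := by
        have := Real.exp_lt_exp.2 hlog
        rw [Real.exp_log (hmpos k)] at this
        exact this.le
      have := hmarg k
      rw [this] at hm
      calc a k = zfun w μ * (a k / zfun w μ) := by field_simp
        _ ≤ zfun w μ * Real.exp (-(ε * k)) :=
            mul_le_mul_of_nonneg_left hm hzpos.le
    -- build summability at μ + (ε/2) e₁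
    apply hall (ε / 2) (by linarith)
    have hrel : ∀ p : ℕ × ℕ,
        zsummand w (μ.1 + ε / 2, μ.2) p = Real.exp (ε / 2 * p.1) * zsummand w μ p := by
      intro p
      simp only [zsummand, dotNat]
      rw [mul_comm (Real.exp _), mul_assoc, ← Real.exp_add]
      congr 1
      ring
    have hz0' : ∀ p, 0 ≤ zsummand w (μ.1 + ε / 2, μ.2) p :=
      fun p => (zsummand_pos w hw _ p).le
    rw [summable_prod_of_nonneg (fun p => hz0' p)]
    constructor
    · intro k
      have : (fun j : ℕ => zsummand w (μ.1 + ε / 2, μ.2) (k, j))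
          = fun j : ℕ => Real.exp (ε / 2 * k) * zsummand w μ (k, j) := by
        funext j; exact hrel (k, j)
      rw [this]
      exact (hasum k).mul_left _
    · have hfib : ∀ k : ℕ, (∑' j : ℕ, zsummand w (μ.1 + ε / 2, μ.2) (k, j))
          = Real.exp (ε / 2 * k) * a k := by
        intro k
        rw [← tsum_mul_left]
        exact tsum_congr fun j => hrel (k, j)
      simp only [hfib]
      have hr1 : Real.exp (-(ε / 2)) < 1 := Real.exp_lt_one_iff.2 (by linarith)
      have hgsum : Summable (fun k : ℕ => zfun w μ * Real.exp (-(ε / 2)) ^ k) :=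
        (summable_geometric_of_lt_one (Real.exp_nonneg _) hr1).mul_left _
      apply summable_of_isBigO_nat hgsum
      apply Asymptotics.IsBigO.of_bound 1
      filter_upwards [hdecay] with k hk
      have h1 : (0 : ℝ) ≤ Real.exp (ε / 2 * k) * a k :=
        mul_nonneg (Real.exp_nonneg _) (hapos k).le
      have h2 : Real.exp (ε / 2 * k) * a k ≤ zfun w μ * Real.exp (-(ε / 2)) ^ k := by
        have := mul_le_mul_of_nonneg_left hk (Real.exp_nonneg (ε / 2 * k))
        calc Real.exp (ε / 2 * k) * a k
            ≤ Real.exp (ε / 2 * k) * (zfun w μ * Real.exp (-(ε * k))) := this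
          _ = zfun w μ * Real.exp (-(ε / 2)) ^ k := by
              rw [← Real.exp_nat_mul, ← mul_assoc, mul_comm (Real.exp _) (zfun w μ),
                mul_assoc, ← Real.exp_add]
              congr 2
              ring
      rw [Real.norm_eq_abs, Real.norm_eq_abs, abs_of_nonneg h1, abs_of_nonneg (mul_nonneg hzpos.le (pow_nonneg (Real.exp_nonneg _) k))]
      linarith

theorem statement17' (w : ℕ × ℕ → ℝ) (hw : ∀ k, 0 < w k)
    (μ : ℝ × ℝ) (hμ : μ ∈ Dmu w) :
    ((Filter.liminf
        (fun k : ℕ => ((-(1 / (k : ℝ)) * Real.log (marg1 w μ k) : ℝ) : EReal)) atTop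
        = (0 : EReal)) ↔
      (∀ ε : ℝ, 0 < ε → ¬ Summable (zsummand w (μ.1 + ε, μ.2)))) ∧
    ((Filter.liminf
        (fun k : ℕ => ((-(1 / (k : ℝ)) * Real.log (marg2 w μ k) : ℝ) : EReal)) atTop
        = (0 : EReal)) ↔
      (∀ ε : ℝ, 0 < ε → ¬ Summable (zsummand w (μ.1, μ.2 + ε)))) := by
  constructor
  · exact key w hw μ hμ
  · set w' : ℕ × ℕ → ℝ := fun k => w (k.2, k.1) with hw'
    have hwpos' : ∀ k, 0 < w' k := fun k => hw _
    have hzs : ∀ a b : ℝ, ∀ k : ℕ × ℕ,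
        zsummand w' (b, a) k = zsummand w (a, b) (k.2, k.1) := by
      intro a b k
      simp only [zsummand, dotNat, hw']
      ring_nf
    have hcomp : ∀ a b : ℝ, zsummand w' (b, a)
        = (zsummand w (a, b)) ∘ (Equiv.prodComm ℕ ℕ) := by
      intro a b
      funext k
      exact hzs a b k
    have hsumm_iff : ∀ a b : ℝ,
        Summable (zsummand w' (b, a)) ↔ Summable (zsummand w (a, b)) := by
      intro a b
      rw [hcomp a b]
      exact (Equiv.prodComm ℕ ℕ).summable_iff
    have hzfun : zfun w' (μ.2, μ.1) = zfun w μ := by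
      unfold zfun
      rw [show (μ : ℝ × ℝ) = (μ.1, μ.2) from rfl] at *
      calc (∑' k : ℕ × ℕ, zsummand w' (μ.2, μ.1) k)
          = ∑' k : ℕ × ℕ, zsummand w (μ.1, μ.2) ((Equiv.prodComm ℕ ℕ) k) :=
            tsum_congr fun k => hzs μ.1 μ.2 k
        _ = ∑' k : ℕ × ℕ, zsummand w (μ.1, μ.2) k :=
            (Equiv.prodComm ℕ ℕ).tsum_eq (zsummand w (μ.1, μ.2))
    have hμ' : ((μ.2, μ.1) : ℝ × ℝ) ∈ Dmu w' := by
      constructor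
      · have : (fun k : ℕ × ℕ => (k.1 : ℝ) * zsummand w' (μ.2, μ.1) k)
            = (fun k : ℕ × ℕ => (k.2 : ℝ) * zsummand w μ k) ∘ (Equiv.prodComm ℕ ℕ) := by
          funext k
          simp only [Function.comp, Equiv.prodComm_apply, Prod.fst_swap, Prod.snd_swap]
          rw [hzs μ.1 μ.2 k]
          rfl
        rw [this]
        exact ((Equiv.prodComm ℕ ℕ).summable_iff).2 hμ.2
      · have : (fun k : ℕ × ℕ => (k.2 : ℝ) * zsummand w' (μ.2, μ.1) k)
            = (fun k : ℕ × ℕ => (k.1 : ℝ) * zsummand w μ k) ∘ (Equiv.prodComm ℕ ℕ) := by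
          funext k
          simp only [Function.comp, Equiv.prodComm_apply, Prod.fst_swap, Prod.snd_swap]
          rw [hzs μ.1 μ.2 k]
          rfl
        rw [this]
        exact ((Equiv.prodComm ℕ ℕ).summable_iff).2 hμ.1
    have hmargs : ∀ k : ℕ, marg2 w μ k = marg1 w' (μ.2, μ.1) k := by
      intro k
      unfold marg1 marg2 nu1
      rw [hzfun]
      refine tsum_congr fun j => ?_
      rw [hzs μ.1 μ.2 (k, j)]
    have hkey := key w' hwpos' (μ.2, μ.1) hμ'
    simp only [← hmargs] at hkey
    rw [hkey]
    constructor
    · intro h ε hε hsum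
      exact h ε hε ((hsumm_iff μ.1 (μ.2 + ε)).2 hsum)
    · intro h ε hε hsum
      exact h ε hε ((hsumm_iff μ.1 (μ.2 + ε)).1 hsum)

/-- **subexponential tail characterization.** For `μ ∈ D_μ`, the marginal
of `ν¹_μ` with respect to species `i` has subexponential tail, i.e.
`liminf_{k→∞} -(1/k) log ν^{1,(i)}_μ(k) = 0`, iff `z(μ + ε e_i) = ∞` for all `ε > 0`. -/
theorem statement17 (w : ℕ × ℕ → ℝ) (hw : ∀ k, 0 < w k) (hexp : ExpBounded w)
    (μ : ℝ × ℝ) (hμ : μ ∈ Dmu w) :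
    ((Filter.liminf
        (fun k : ℕ => ((-(1 / (k : ℝ)) * Real.log (marg1 w μ k) : ℝ) : EReal)) atTop
        = (0 : EReal)) ↔
      (∀ ε : ℝ, 0 < ε → ¬ Summable (zsummand w (μ.1 + ε, μ.2)))) ∧
    ((Filter.liminf
        (fun k : ℕ => ((-(1 / (k : ℝ)) * Real.log (marg2 w μ k) : ℝ) : EReal)) atTop
        = (0 : EReal)) ↔
      (∀ ε : ℝ, 0 < ε → ¬ Summable (zsummand w (μ.1, μ.2 + ε)))) :=
  statement17' w hw μ hμ
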